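/- Let (Ω, ℱ, μ) be a probability space, m ⊆ m' ⊆ ℱ sub-σ-algebras, and η, κ ≥ 0. Let λ be a nonnegative, m-measurable, square-integrable random variable; let Z be a square-integrable, m'-measurable random variable that is conditionally Poisson given m with intensity λ; let W be a nonnegative, square-integrable, m'-measurable random variable independent of the σ-algebra generated by m and Z; set λ' := W + η·Z + κ·λ; and let Z' be a square-integrable random variable that is conditionally Poisson given m' with intensity λ'. Then Var(Z') = Var(W) + (η + κ)²·Var(Z) − (κ² + 2κη)·E[Z] + E[Z']. -/

import Mathlib

open MeasureTheory ProbabilityTheory Real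

private lemma memL2_integrable_mul {Ω : Type*} {mΩ : MeasurableSpace Ω} {μ : Measure Ω}
    {f g : Ω → ℝ} (hf : MemLp f 2 μ) (hg : MemLp g 2 μ) :
    Integrable (fun x => f x * g x) μ := by
  have h := (((hf.add hg).integrable_sq.sub hf.integrable_sq).sub hg.integrable_sq).div_const 2
  exact h.congr (Filter.Eventually.of_forall fun x => by simp [Pi.add_apply]; ring)

private lemma indep_mono_right {Ω : Type*} {mΩ : MeasurableSpace Ω} {μ : Measure Ω}
    {m₁ m₂ m₃ : MeasurableSpace Ω} (h : Indep m₁ m₂ μ) (h32 : m₃ ≤ m₂) :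
    Indep m₁ m₃ μ := by
  rw [Indep_iff] at h ⊢
  exact fun t1 t2 ht1 ht2 => h t1 t2 ht1 (h32 _ ht2)

/-- One-step variance recursion of the SPINGARCH(1,1) process: if `Z` is conditionally
Poisson given `m` with intensity `λ`, `W` is independent of `σ(m, Z)`, and `Z'` is
conditionally Poisson given `m'` with intensity `λ' = W + η·Z + κ·λ`, then
`Var(Z') = Var(W) + (η+κ)²·Var(Z) − (κ² + 2κη)·E[Z] + E[Z']`. -/
theorem spingarch_variance_recursion
    {Ω : Type*} [F : MeasurableSpace Ω] (μ : Measure Ω) [IsProbabilityMeasure μ]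
    (m m' : MeasurableSpace Ω) (hmm' : m ≤ m') (hm' : m' ≤ F)
    (η κ : ℝ) (hη : 0 ≤ η) (hκ : 0 ≤ κ)
    (lam Z W Z' : Ω → ℝ)
    (hlam_nonneg : ∀ ω, 0 ≤ lam ω)
    (hlam_meas : StronglyMeasurable[m] lam)
    (hlam_L2 : MemLp lam 2 μ)
    (hZ_L2 : MemLp Z 2 μ)
    (hZ_meas : StronglyMeasurable[m'] Z)
    (hZ_mean : μ[Z | m] =ᵐ[μ] lam)
    (hZ_sq : μ[fun ω => Z ω ^ 2 | m] =ᵐ[μ] fun ω => lam ω + lam ω ^ 2)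
    (hW_nonneg : ∀ ω, 0 ≤ W ω)
    (hW_L2 : MemLp W 2 μ)
    (hW_meas : StronglyMeasurable[m'] W)
    (hW_indep : Indep (MeasurableSpace.comap W Real.measurableSpace)
      (m ⊔ MeasurableSpace.comap Z Real.measurableSpace) μ)
    (lam' : Ω → ℝ) (hlam'_def : lam' = fun ω => W ω + η * Z ω + κ * lam ω)
    (hZ'_L2 : MemLp Z' 2 μ)
    (hZ'_mean : μ[Z' | m'] =ᵐ[μ] lam')
    (hZ'_sq : μ[fun ω => Z' ω ^ 2 | m'] =ᵐ[μ] fun ω => lam' ω + lam' ω ^ 2) :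
    variance Z' μ = variance W μ + (η + κ) ^ 2 * variance Z μ
      - (κ ^ 2 + 2 * κ * η) * (∫ ω, Z ω ∂μ) + ∫ ω, Z' ω ∂μ := by
  have hm : m ≤ F := hmm'.trans hm'
  set V : Ω → ℝ := fun ω => η * Z ω + κ * lam ω with hV_def
  have hV_L2 : MemLp V 2 μ := (hZ_L2.const_mul η).add (hlam_L2.const_mul κ)
  have hlam'_L2 : MemLp lam' 2 μ := by
    rw [hlam'_def]
    exact (hW_L2.add (hZ_L2.const_mul η)).add (hlam_L2.const_mul κ)
  have hlam'_eq : lam' = W + V := by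
    funext ω; simp [hlam'_def, hV_def, Pi.add_apply]; ring
  -- basic integrabilities
  have hZ_int : Integrable Z μ := hZ_L2.integrable one_le_two
  have hlam_int : Integrable lam μ := hlam_L2.integrable one_le_two
  have hlam'_int : Integrable lam' μ := hlam'_L2.integrable one_le_two
  have hlamZ_int : Integrable (lam * Z) μ := memL2_integrable_mul hlam_L2 hZ_L2
  -- E[lam] = E[Z]
  have h1 : ∫ ω, lam ω ∂μ = ∫ ω, Z ω ∂μ := by
    rw [← integral_congr_ae hZ_mean, integral_condExp hm]
  -- E[Z^2] = E[lam] + E[lam^2]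
  have h2 : ∫ ω, Z ω ^ 2 ∂μ = (∫ ω, lam ω ∂μ) + ∫ ω, lam ω ^ 2 ∂μ := by
    rw [show ∫ ω, Z ω ^ 2 ∂μ = ∫ ω, (μ[fun ω => Z ω ^ 2 | m]) ω ∂μ from
      (integral_condExp hm).symm, integral_congr_ae hZ_sq]
    exact integral_add hlam_int hlam_L2.integrable_sq
  -- E[lam * Z] = E[lam^2]
  have h3 : ∫ ω, lam ω * Z ω ∂μ = ∫ ω, lam ω ^ 2 ∂μ := by
    have hpull := condExp_mul_of_stronglyMeasurable_left hlam_meas hlamZ_int hZ_int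
    calc ∫ ω, lam ω * Z ω ∂μ = ∫ ω, (μ[lam * Z | m]) ω ∂μ := (integral_condExp hm).symm
      _ = ∫ ω, (lam * μ[Z | m]) ω ∂μ := integral_congr_ae hpull
      _ = ∫ ω, lam ω ^ 2 ∂μ := by
          refine integral_congr_ae (hZ_mean.mono fun ω hω => ?_)
          simp [Pi.mul_apply, hω]; ring
  -- E[Z'] = E[lam']
  have h4 : ∫ ω, Z' ω ∂μ = ∫ ω, lam' ω ∂μ := by
    rw [← integral_congr_ae hZ'_mean, integral_condExp hm']
  -- E[Z'^2] = E[lam'] + E[lam'^2]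
  have h5 : ∫ ω, Z' ω ^ 2 ∂μ = (∫ ω, lam' ω ∂μ) + ∫ ω, lam' ω ^ 2 ∂μ := by
    rw [show ∫ ω, Z' ω ^ 2 ∂μ = ∫ ω, (μ[fun ω => Z' ω ^ 2 | m']) ω ∂μ from
      (integral_condExp hm').symm, integral_congr_ae hZ'_sq]
    exact integral_add hlam'_int hlam'_L2.integrable_sq
  -- independence of W and V
  have hV_meas : Measurable[m ⊔ MeasurableSpace.comap Z Real.measurableSpace] V := by
    have hZm : Measurable[m ⊔ MeasurableSpace.comap Z Real.measurableSpace] Z :=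
      measurable_iff_comap_le.2 le_sup_right
    have hlamm : Measurable[m ⊔ MeasurableSpace.comap Z Real.measurableSpace] lam :=
      measurable_iff_comap_le.2 ((measurable_iff_comap_le.1 hlam_meas.measurable).trans le_sup_left)
    exact (measurable_const.mul hZm).add (measurable_const.mul hlamm)
  have hWV : IndepFun W V μ := by
    rw [IndepFun_iff_Indep]
    exact indep_mono_right hW_indep (measurable_iff_comap_le.1 hV_meas)
  -- variance of lam'
  have hvar_lam' : variance lam' μ = variance W μ + variance V μ := by
    rw [hlam'_eq]
    exact hWV.variance_add hW_L2 hV_L2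
  -- express variances via moments
  have hvZ' : variance Z' μ = (∫ ω, Z' ω ^ 2 ∂μ) - (∫ ω, Z' ω ∂μ) ^ 2 := by
    rw [variance_eq_sub hZ'_L2]; rfl
  have hvZ : variance Z μ = (∫ ω, Z ω ^ 2 ∂μ) - (∫ ω, Z ω ∂μ) ^ 2 := by
    rw [variance_eq_sub hZ_L2]; rfl
  have hvlam' : variance lam' μ = (∫ ω, lam' ω ^ 2 ∂μ) - (∫ ω, lam' ω ∂μ) ^ 2 := by
    rw [variance_eq_sub hlam'_L2]; rfl
  have hvV : variance V μ = (∫ ω, V ω ^ 2 ∂μ) - (∫ ω, V ω ∂μ) ^ 2 := by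
    rw [variance_eq_sub hV_L2]; rfl
  -- compute ∫ V and ∫ V^2
  have hVint : ∫ ω, V ω ∂μ = η * (∫ ω, Z ω ∂μ) + κ * (∫ ω, lam ω ∂μ) := by
    simp only [hV_def]
    rw [integral_add (hZ_int.const_mul η) (hlam_int.const_mul κ),
      integral_const_mul, integral_const_mul]
  have hVsq : ∫ ω, V ω ^ 2 ∂μ
      = η ^ 2 * (∫ ω, Z ω ^ 2 ∂μ) + 2 * η * κ * (∫ ω, lam ω * Z ω ∂μ)
        + κ ^ 2 * (∫ ω, lam ω ^ 2 ∂μ) := by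
    have heq : ∀ ω, V ω ^ 2
        = η ^ 2 * Z ω ^ 2 + 2 * η * κ * (lam ω * Z ω) + κ ^ 2 * lam ω ^ 2 := by
      intro ω; simp only [hV_def]; ring
    rw [integral_congr_ae (Filter.Eventually.of_forall heq)]
    have i1 : Integrable (fun ω => η ^ 2 * Z ω ^ 2) μ := hZ_L2.integrable_sq.const_mul _
    have i2 : Integrable (fun ω => 2 * η * κ * (lam ω * Z ω)) μ :=
      (memL2_integrable_mul hlam_L2 hZ_L2).const_mul _
    have i3 : Integrable (fun ω => κ ^ 2 * lam ω ^ 2) μ := hlam_L2.integrable_sq.const_mul _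
    have i12 : Integrable (fun ω => η ^ 2 * Z ω ^ 2 + 2 * η * κ * (lam ω * Z ω)) μ := i1.add i2
    rw [integral_add i12 i3, integral_add i1 i2, integral_const_mul,
      integral_const_mul, integral_const_mul]
  -- put everything together
  have hEL2 : ∫ ω, lam ω ^ 2 ∂μ = (∫ ω, Z ω ^ 2 ∂μ) - ∫ ω, Z ω ∂μ := by linarith
  have key := hvar_lam'
  rw [hvlam', hvV, hVsq, hVint, h3, hEL2, h1] at key
  rw [hvZ', h5, h4, hvZ]
  linear_combination key
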